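/- Let 0<p≤1 and let μ be a finite positive Borel measure on [0,1) that is a (1/p)-Carleson measure. If H_{μ,α} : H^p → H^1 is bounded for some α>0, then for every 0<α'<α the operator H_{μ,α'} : H^p → H^1 is bounded. -/

import Mathlib

open MeasureTheory Filter Set
open scoped ENNReal

noncomputable section

/-- The `p`-th power mean of `|f|` over the circle of radius `r`. -/
def circleMean (p : ℝ) (f : ℂ → ℂ) (r : ℝ) : ℝ :=
  (1 / (2 * Real.pi)) *
    ∫ θ in (0:ℝ)..(2 * Real.pi), ‖f ((r : ℂ) * Complex.exp ((θ : ℂ) * Complex.I))‖ ^ p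

/-- The Hardy space `H^p` norm of `f`, valued in `ℝ≥0∞`. -/
def hardyNorm (p : ℝ) (f : ℂ → ℂ) : ℝ≥0∞ :=
  ⨆ r ∈ Set.Ioo (0:ℝ) 1, ENNReal.ofReal ((circleMean p f r) ^ (1 / p))

/-- `f` belongs to the Hardy space `H^p` of the unit disc. -/
def MemHp (p : ℝ) (f : ℂ → ℂ) : Prop :=
  DifferentiableOn ℂ f (Metric.ball (0:ℂ) 1) ∧ hardyNorm p f < ⊤

/-- The `k`-th Taylor coefficient of `f` at `0`. -/
def taylorCoeff (f : ℂ → ℂ) (k : ℕ) : ℂ :=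
  iteratedDeriv k f 0 / (Nat.factorial k : ℂ)

/-- The entries `μ_{n,k,α}` of the generalized Hankel matrix. -/
def hilbCoef (μ : Measure ℝ) (α : ℝ) (n k : ℕ) : ℝ :=
  ∫ t in Set.Ico (0:ℝ) 1,
    (Real.Gamma ((n : ℝ) + α) / (Real.Gamma ((n : ℝ) + 1) * Real.Gamma α)) * t ^ (n + k) ∂μ

/-- The generalized Hilbert operator `H_{μ,α}`. -/
def genHilbert (μ : Measure ℝ) (α : ℝ) (f : ℂ → ℂ) : ℂ → ℂ :=
  fun z => ∑' n : ℕ, (∑' k : ℕ, (hilbCoef μ α n k : ℂ) * taylorCoeff f k) * z ^ n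

/-- `μ` is an `s`-Carleson measure on `[0,1)`. -/
def IsCarleson (μ : Measure ℝ) (s : ℝ) : Prop :=
  ∃ C : ℝ, 0 < C ∧ ∀ t : ℝ, 0 ≤ t → t < 1 →
    (μ (Set.Ico t 1)).toReal ≤ C * (1 - t) ^ s

/-- `μ` is a vanishing `s`-Carleson measure on `[0,1)`. -/
def IsVanishingCarleson (μ : Measure ℝ) (s : ℝ) : Prop :=
  Tendsto (fun t : ℝ => (μ (Set.Ico t 1)).toReal / (1 - t) ^ s)
    (nhdsWithin 1 (Set.Iio (1:ℝ))) (nhds 0)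

/-- `μ` is a `β`-logarithmic `s`-Carleson measure on `[0,1)`. -/
def IsLogCarleson (μ : Measure ℝ) (β s : ℝ) : Prop :=
  ∃ C : ℝ, 0 < C ∧ ∀ t : ℝ, 0 ≤ t → t < 1 →
    (μ (Set.Ico t 1)).toReal * (Real.log (Real.exp 1 / (1 - t))) ^ β ≤ C * (1 - t) ^ s

/-- `μ` is a vanishing `β`-logarithmic `s`-Carleson measure on `[0,1)`. -/
def IsVanishingLogCarleson (μ : Measure ℝ) (β s : ℝ) : Prop :=
  Tendsto
    (fun t : ℝ =>
      (μ (Set.Ico t 1)).toReal * (Real.log (Real.exp 1 / (1 - t))) ^ β / (1 - t) ^ s)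
    (nhdsWithin 1 (Set.Iio (1:ℝ))) (nhds 0)

/-- `H_{μ,α}` is a bounded operator from `H^p` into `H^q`. -/
def BoundedOp (μ : Measure ℝ) (α p q : ℝ) : Prop :=
  ∃ C : ℝ, 0 < C ∧ ∀ f : ℂ → ℂ, MemHp p f →
    MemHp q (genHilbert μ α f) ∧
    hardyNorm q (genHilbert μ α f) ≤ ENNReal.ofReal C * hardyNorm p f

/-- `T` maps bounded sequences of `H^p` to sequences with subsequences converging
in the `H^q` norm to an element of `H^q`, i.e. `T` is a compact operator from
`H^p` into `H^q`. -/
def CompactMap (p q : ℝ) (T : (ℂ → ℂ) → ℂ → ℂ) : Prop :=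
  ∀ F : ℕ → ℂ → ℂ, (∀ n, MemHp p (F n)) →
    (∃ M : ℝ, ∀ n, hardyNorm p (F n) ≤ ENNReal.ofReal M) →
    ∃ (g : ℂ → ℂ) (φ : ℕ → ℕ), StrictMono φ ∧ MemHp q g ∧
      Tendsto (fun n => hardyNorm q (fun z => T (F (φ n)) z - g z)) atTop (nhds 0)

/-- `H_{μ,α}` is a compact operator from `H^p` into `H^q`. -/
def CompactOp (μ : Measure ℝ) (α p q : ℝ) : Prop :=
  CompactMap p q (genHilbert μ α)

/-- `T` is linear on `H^p`. -/
def LinearOn (p : ℝ) (T : (ℂ → ℂ) → ℂ → ℂ) : Prop :=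
  (∀ f g : ℂ → ℂ, MemHp p f → MemHp p g →
      ∀ z, T (fun w => f w + g w) z = T f z + T g z) ∧
  (∀ (c : ℂ) (f : ℂ → ℂ), MemHp p f → ∀ z, T (fun w => c * f w) z = c * T f z)

/-- The `H^p → H^q` operator norm of the difference `T - K`. -/
def opDist (p q : ℝ) (T K : (ℂ → ℂ) → ℂ → ℂ) : ℝ≥0∞ :=
  ⨆ f ∈ {f : ℂ → ℂ | MemHp p f ∧ hardyNorm p f ≤ 1},
    hardyNorm q (fun z => T f z - K f z)

/-- The essential norm of `H_{μ,α} : H^p → H^q`: the distance to the compact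
linear operators. -/
def essNorm (μ : Measure ℝ) (α p q : ℝ) : ℝ≥0∞ :=
  ⨅ K ∈ {K : (ℂ → ℂ) → ℂ → ℂ | LinearOn p K ∧ CompactMap p q K},
    opDist p q (genHilbert μ α) K

/-- `limsup_{t→1⁻} μ([t,1))/(1-t)^s`. -/
def carlesonLimsup (μ : Measure ℝ) (s : ℝ) : ℝ :=
  Filter.limsup (fun t : ℝ => (μ (Set.Ico t 1)).toReal / (1 - t) ^ s)
    (nhdsWithin 1 (Set.Iio (1:ℝ)))

/-- The fractional derivative operator `R^{-1,α-1}`. -/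
def fracDeriv (α : ℝ) (g : ℂ → ℂ) (w : ℂ) : ℂ :=
  ∑' n : ℕ,
    ((Real.Gamma ((n : ℝ) + α) / (Real.Gamma ((n : ℝ) + 1) * Real.Gamma α) : ℝ) : ℂ) *
      taylorCoeff g n * w ^ n


-- ========================= Auxiliary lemmas =========================

open MeasureTheory

noncomputable section HardyAux

/-- The circle mean with exponent `1`, in simplified form. -/
lemma circleMean_one_eq (f : ℂ → ℂ) (r : ℝ) :
    circleMean 1 f r = (1 / (2 * Real.pi)) *
      ∫ θ in (0:ℝ)..(2 * Real.pi), ‖f ((r : ℂ) * Complex.exp ((θ : ℂ) * Complex.I))‖ := by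
  simp [circleMean, Real.rpow_one]

lemma circleMean_one_nonneg (f : ℂ → ℂ) (r : ℝ) : 0 ≤ circleMean 1 f r := by
  rw [circleMean_one_eq]
  have h2π : (0:ℝ) ≤ 2 * Real.pi := by positivity
  refine mul_nonneg (by positivity) ?_
  exact intervalIntegral.integral_nonneg h2π fun θ _ => norm_nonneg _

lemma hardyNorm_one_eq (f : ℂ → ℂ) :
    hardyNorm 1 f = ⨆ r ∈ Set.Ioo (0:ℝ) 1, ENNReal.ofReal (circleMean 1 f r) := by
  unfold hardyNorm
  norm_num [Real.rpow_one]

lemma circleMean_le_toReal {f : ℂ → ℂ} (hf : hardyNorm 1 f ≠ ⊤) {r : ℝ}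
    (hr : r ∈ Set.Ioo (0:ℝ) 1) :
    circleMean 1 f r ≤ (hardyNorm 1 f).toReal := by
  have h1 : ENNReal.ofReal (circleMean 1 f r) ≤ hardyNorm 1 f := by
    rw [hardyNorm_one_eq]
    exact le_biSup (fun r => ENNReal.ofReal (circleMean 1 f r)) hr
  calc circleMean 1 f r
      = (ENNReal.ofReal (circleMean 1 f r)).toReal :=
        (ENNReal.toReal_ofReal (circleMean_one_nonneg f r)).symm
    _ ≤ _ := ENNReal.toReal_mono hf h1

lemma hardyNorm_one_le {f : ℂ → ℂ} {M : ℝ}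
    (h : ∀ r ∈ Set.Ioo (0:ℝ) 1, circleMean 1 f r ≤ M) :
    hardyNorm 1 f ≤ ENNReal.ofReal M := by
  rw [hardyNorm_one_eq]
  exact iSup₂_le fun r hr => ENNReal.ofReal_le_ofReal (h r hr)

lemma beta_integrableOn {a b : ℝ} (ha : 0 < a) (hb : 0 < b) :
    IntegrableOn (fun t : ℝ => t ^ (a - 1) * (1 - t) ^ (b - 1)) (Set.Ioo (0:ℝ) 1) := by
  have h := Complex.betaIntegral_convergent (u := (a:ℂ)) (v := (b:ℂ)) (by simpa) (by simpa)
  have h2 : IntegrableOn (fun x : ℝ => (x:ℂ) ^ ((a:ℂ) - 1) * (1 - (x:ℂ)) ^ ((b:ℂ) - 1))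
      (Set.Ioo (0:ℝ) 1) := by
    have h3 := (intervalIntegrable_iff_integrableOn_Ioc_of_le (by norm_num : (0:ℝ) ≤ 1)).1 h
    exact h3.mono_set Set.Ioo_subset_Ioc_self
  have h4 := h2.norm
  apply MeasureTheory.IntegrableOn.congr_fun h4 ?_ measurableSet_Ioo
  intro t ht
  have h1t : (0:ℝ) ≤ t := ht.1.le
  have h2t : (0:ℝ) ≤ 1 - t := by linarith [ht.2]
  have e1 : ((a:ℂ) - 1) = ((a - 1 : ℝ) : ℂ) := by push_cast; ring
  have e2 : ((b:ℂ) - 1) = ((b - 1 : ℝ) : ℂ) := by push_cast; ring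
  have e3 : (1 : ℂ) - (t : ℂ) = ((1 - t : ℝ) : ℂ) := by push_cast; ring
  simp only [e1, e2, e3, ← Complex.ofReal_cpow h1t, ← Complex.ofReal_cpow h2t,
    ← Complex.ofReal_mul, Complex.norm_real, Real.norm_eq_abs]
  exact abs_of_nonneg (mul_nonneg (Real.rpow_nonneg h1t _) (Real.rpow_nonneg h2t _))

lemma beta_value {a b : ℝ} (ha : 0 < a) (hb : 0 < b) :
    ∫ t in Set.Ioo (0:ℝ) 1, t ^ (a - 1) * (1 - t) ^ (b - 1) =
      Real.Gamma a * Real.Gamma b / Real.Gamma (a + b) := by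
  have key := Complex.Gamma_mul_Gamma_eq_betaIntegral (s := (a:ℂ)) (t := (b:ℂ))
    (by simpa) (by simpa)
  have hint : Complex.betaIntegral (a:ℂ) (b:ℂ) =
      ((∫ t in Set.Ioo (0:ℝ) 1, t ^ (a - 1) * (1 - t) ^ (b - 1) : ℝ) : ℂ) := by
    rw [Complex.betaIntegral, intervalIntegral.integral_of_le (by norm_num : (0:ℝ) ≤ 1),
      MeasureTheory.integral_Ioc_eq_integral_Ioo]
    rw [show (∫ t in Set.Ioo (0:ℝ) 1, ((t:ℂ) ^ ((a:ℂ) - 1) * (1 - (t:ℂ)) ^ ((b:ℂ) - 1)))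
        = ∫ t in Set.Ioo (0:ℝ) 1, (((t ^ (a - 1) * (1 - t) ^ (b - 1) : ℝ)) : ℂ) from
      setIntegral_congr_fun measurableSet_Ioo (fun t ht => by
        have h1t : (0:ℝ) ≤ t := ht.1.le
        have h2t : (0:ℝ) ≤ 1 - t := by linarith [ht.2]
        have e1 : ((a:ℂ) - 1) = ((a - 1 : ℝ) : ℂ) := by push_cast; ring
        have e2 : ((b:ℂ) - 1) = ((b - 1 : ℝ) : ℂ) := by push_cast; ring
        have e3 : (1 : ℂ) - (t : ℂ) = ((1 - t : ℝ) : ℂ) := by push_cast; ring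
        simp only [e1, e2, e3, ← Complex.ofReal_cpow h1t, ← Complex.ofReal_cpow h2t,
          ← Complex.ofReal_mul])]
    exact integral_ofReal
  rw [hint] at key
  rw [show ((a:ℂ) + (b:ℂ)) = ((a + b : ℝ) : ℂ) by push_cast; ring] at key
  rw [Complex.Gamma_ofReal, Complex.Gamma_ofReal, Complex.Gamma_ofReal] at key
  have keyR : Real.Gamma a * Real.Gamma b =
      Real.Gamma (a + b) * ∫ t in Set.Ioo (0:ℝ) 1, t ^ (a - 1) * (1 - t) ^ (b - 1) := by
    exact_mod_cast key
  have hne : Real.Gamma (a + b) ≠ 0 := (Real.Gamma_pos_of_pos (by linarith)).ne'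
  rw [eq_div_iff hne, mul_comm]
  exact keyR.symm

end HardyAux

noncomputable section HardyMult

open scoped NNReal

set_option maxHeartbeats 1000000 in
open FormalMultilinearSeries in
lemma hardy_mult (b : ℕ → ℂ) (c : ℕ → ℝ) (w : ℝ → ℝ) (B : ℝ) (hB : 0 < B)
    (hw0 : ∀ t ∈ Set.Ioo (0:ℝ) 1, 0 ≤ w t)
    (hwcont : ContinuousOn w (Set.Ioo (0:ℝ) 1))
    (hwint : IntegrableOn w (Set.Ioo (0:ℝ) 1))
    (hmom_int : ∀ n : ℕ, IntegrableOn (fun t => t ^ n * w t) (Set.Ioo (0:ℝ) 1))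
    (hmom : ∀ n : ℕ, c n * B = ∫ t in Set.Ioo (0:ℝ) 1, t ^ n * w t)
    (hc0 : ∀ n, 0 < c n) (hc1 : ∀ n, c n ≤ 1)
    (hlow : ∀ ρ : ℝ, ρ ∈ Set.Ioo (0:ℝ) 1 → ∃ δ : ℝ, 0 < δ ∧ ∀ n : ℕ, δ * ρ ^ n ≤ c n)
    (hg : MemHp 1 (fun z : ℂ => ∑' n : ℕ, b n * z ^ n)) :
    MemHp 1 (fun z : ℂ => ∑' n : ℕ, (c n : ℂ) * b n * z ^ n) ∧
      hardyNorm 1 (fun z : ℂ => ∑' n : ℕ, (c n : ℂ) * b n * z ^ n) ≤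
        hardyNorm 1 (fun z : ℂ => ∑' n : ℕ, b n * z ^ n) := by
  classical
  set g : ℂ → ℂ := fun z => ∑' n : ℕ, b n * z ^ n with hgdef
  set G : ℂ → ℂ := fun z => ∑' n : ℕ, (c n : ℂ) * b n * z ^ n with hGdef
  obtain ⟨hgd, hgfin⟩ := hg
  have hπ : (0:ℝ) < Real.pi := Real.pi_pos
  set M : ℝ := (hardyNorm 1 g).toReal with hMdef
  have hM0 : 0 ≤ M := ENNReal.toReal_nonneg
  set p : FormalMultilinearSeries ℂ ℂ ℂ := ofScalars ℂ b with hpdef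
  set q : FormalMultilinearSeries ℂ ℂ ℂ := ofScalars ℂ (fun n => (c n : ℂ) * b n) with hqdef
  have hpsum : p.sum = g := by
    funext z
    exact tsum_congr fun n => by rw [ofScalars_apply_eq, smul_eq_mul]
  have hqsum : q.sum = G := by
    funext z
    exact tsum_congr fun n => by rw [ofScalars_apply_eq, smul_eq_mul]
  have hpnorm : ∀ n, ‖p n‖ = ‖b n‖ := fun n => ofScalars_norm ℂ b n
  have hqnorm : ∀ n, ‖q n‖ = c n * ‖b n‖ := by
    intro n
    rw [hqdef, ofScalars_norm, norm_mul, Complex.norm_real, Real.norm_eq_abs,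
      abs_of_pos (hc0 n)]
  have hterm : ∀ (n : ℕ) (t : ℝ) (z : ℂ), 0 ≤ t → t ≤ 1 →
      ‖b n * ((t:ℂ) * z) ^ n‖ ≤ ‖b n‖ * ‖z‖ ^ n := by
    intro n t z ht0 ht1
    rw [norm_mul, norm_pow]
    refine mul_le_mul_of_nonneg_left ?_ (norm_nonneg _)
    refine pow_le_pow_left₀ (norm_nonneg _) ?_ n
    rw [norm_mul, Complex.norm_real, Real.norm_eq_abs, abs_of_nonneg ht0]
    nlinarith [norm_nonneg z]
  rcases le_or_gt 1 p.radius with h1le | hlt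
  · -- Case A : the power series converges on the unit disc
    have hsum : ∀ r : ℝ, 0 ≤ r → r < 1 → Summable (fun n => ‖b n‖ * r ^ n) := by
      intro r h0 h1
      have hrlt : ((r.toNNReal : ℝ≥0∞)) < p.radius := by
        have he : ((r.toNNReal : ℝ≥0∞)) = ENNReal.ofReal r := rfl
        rw [he]
        exact lt_of_lt_of_le (ENNReal.ofReal_lt_one.2 h1) h1le
      have := p.summable_norm_mul_pow hrlt
      simpa [hpnorm, Real.coe_toNNReal r h0] using this
    have hqrad : 1 ≤ q.radius := by
      apply ENNReal.le_of_forall_nnreal_lt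
      intro s hs
      apply q.le_radius_of_summable
      have hbs : Summable fun n => ‖b n‖ * (s:ℝ) ^ n :=
        hsum s s.2 (by exact_mod_cast hs)
      refine Summable.of_nonneg_of_le (fun n => by positivity) (fun n => ?_) hbs
      rw [hqnorm]
      have hle : c n * ‖b n‖ ≤ ‖b n‖ := by
        nlinarith [hc0 n, hc1 n, norm_nonneg (b n)]
      exact mul_le_mul_of_nonneg_right hle (by positivity)
    have hqpos : 0 < q.radius := lt_of_lt_of_le zero_lt_one hqrad
    have hdiff : DifferentiableOn ℂ G (Metric.ball (0:ℂ) 1) := by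
      rw [← hqsum]
      refine ((q.hasFPowerSeriesOnBall hqpos).differentiableOn).mono ?_
      intro z hz
      simp only [Metric.mem_ball, dist_zero_right] at hz
      rw [mem_emetric_ball_zero_iff, ← ofReal_norm]
      exact lt_of_lt_of_le (ENNReal.ofReal_lt_one.2 hz) hqrad
    -- Integral representation
    have key : ∀ z : ℂ, ‖z‖ < 1 →
        G z * (B:ℂ) = ∫ t in Set.Ioo (0:ℝ) 1, g ((t:ℂ) * z) * (w t : ℂ) := by
      intro z hz
      have hburz : Summable fun n => ‖b n‖ * ‖z‖ ^ n := hsum ‖z‖ (norm_nonneg z) hz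
      set F : ℕ → ℝ → ℂ :=
        fun N t => (∑ n ∈ Finset.range N, b n * ((t:ℂ) * z) ^ n) * (w t : ℂ) with hF
      have hbound : Integrable (fun t => (∑' n : ℕ, ‖b n‖ * ‖z‖ ^ n) * w t)
          (volume.restrict (Set.Ioo (0:ℝ) 1)) := hwint.const_mul _
      have hFm : ∀ N, AEStronglyMeasurable (F N) (volume.restrict (Set.Ioo (0:ℝ) 1)) := by
        intro N
        apply ContinuousOn.aestronglyMeasurable ?_ measurableSet_Ioo
        apply ContinuousOn.mul ?_ (Complex.continuous_ofReal.comp_continuousOn hwcont)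
        refine (continuous_finset_sum _ fun n _ => ?_).continuousOn
        exact continuous_const.mul ((Complex.continuous_ofReal.mul continuous_const).pow n)
      have hFle : ∀ N, ∀ᵐ t ∂(volume.restrict (Set.Ioo (0:ℝ) 1)),
          ‖F N t‖ ≤ (∑' n : ℕ, ‖b n‖ * ‖z‖ ^ n) * w t := by
        intro N
        rw [MeasureTheory.ae_restrict_iff' measurableSet_Ioo]
        refine Filter.Eventually.of_forall (fun t ht => ?_)
        have hw := hw0 t ht
        rw [hF]
        simp only []
        rw [norm_mul, Complex.norm_real, Real.norm_eq_abs, abs_of_nonneg hw]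
        refine mul_le_mul_of_nonneg_right ?_ hw
        calc ‖∑ n ∈ Finset.range N, b n * ((t:ℂ) * z) ^ n‖
            ≤ ∑ n ∈ Finset.range N, ‖b n * ((t:ℂ) * z) ^ n‖ := norm_sum_le _ _
          _ ≤ ∑ n ∈ Finset.range N, ‖b n‖ * ‖z‖ ^ n :=
              Finset.sum_le_sum fun n _ => hterm n t z ht.1.le ht.2.le
          _ ≤ ∑' n : ℕ, ‖b n‖ * ‖z‖ ^ n :=
              Summable.sum_le_tsum _ (fun n _ => by positivity) hburz
      have hFtend : ∀ᵐ t ∂(volume.restrict (Set.Ioo (0:ℝ) 1)),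
          Filter.Tendsto (fun N => F N t) Filter.atTop
            (nhds (g ((t:ℂ) * z) * (w t : ℂ))) := by
        rw [MeasureTheory.ae_restrict_iff' measurableSet_Ioo]
        refine Filter.Eventually.of_forall (fun t ht => ?_)
        have hsummable : Summable fun n => b n * ((t:ℂ) * z) ^ n := by
          apply Summable.of_norm
          exact Summable.of_nonneg_of_le (fun n => norm_nonneg _)
            (fun n => hterm n t z ht.1.le ht.2.le) hburz
        exact (hsummable.hasSum.tendsto_sum_nat).mul_const _
      have hDC := MeasureTheory.tendsto_integral_of_dominated_convergence _ hFm hbound hFle hFtend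
      have hFint : ∀ N, (∫ t in Set.Ioo (0:ℝ) 1, F N t) =
          (∑ n ∈ Finset.range N, (c n : ℂ) * b n * z ^ n) * (B:ℂ) := by
        intro N
        have hFrw : (fun t => F N t) =
            fun t => ∑ n ∈ Finset.range N, (b n * z ^ n) * ((t ^ n * w t : ℝ) : ℂ) := by
          funext t
          rw [hF]
          simp only []
          rw [Finset.sum_mul]
          refine Finset.sum_congr rfl fun n _ => ?_
          push_cast
          ring
        rw [hFrw]
        rw [MeasureTheory.integral_finset_sum]
        · rw [Finset.sum_mul]
          refine Finset.sum_congr rfl fun n _ => ?_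
          rw [MeasureTheory.integral_const_mul]
          have hio : (∫ a in Set.Ioo (0:ℝ) 1, ((a ^ n * w a : ℝ) : ℂ))
              = ((∫ a in Set.Ioo (0:ℝ) 1, a ^ n * w a : ℝ) : ℂ) := integral_ofReal
          rw [hio, ← hmom n]
          push_cast
          ring
        · intro n _
          exact (hmom_int n).ofReal.const_mul _
      have h2 : Filter.Tendsto
          (fun N => (∑ n ∈ Finset.range N, (c n : ℂ) * b n * z ^ n) * (B:ℂ))
          Filter.atTop (nhds (G z * (B:ℂ))) := by
        refine Filter.Tendsto.mul_const _ ?_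
        apply HasSum.tendsto_sum_nat
        apply Summable.hasSum
        apply Summable.of_norm
        refine Summable.of_nonneg_of_le (fun n => norm_nonneg _) (fun n => ?_) hburz
        rw [norm_mul, norm_mul, norm_pow, Complex.norm_real, Real.norm_eq_abs,
          abs_of_pos (hc0 n)]
        nlinarith [hc0 n, hc1 n, norm_nonneg (b n), pow_nonneg (norm_nonneg z) n,
          mul_nonneg (norm_nonneg (b n)) (pow_nonneg (norm_nonneg z) n)]
      have hDC' : Filter.Tendsto
          (fun N => (∑ n ∈ Finset.range N, (c n : ℂ) * b n * z ^ n) * (B:ℂ))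
          Filter.atTop (nhds (∫ t in Set.Ioo (0:ℝ) 1, g ((t:ℂ) * z) * (w t : ℂ))) :=
        hDC.congr fun N => hFint N
      exact tendsto_nhds_unique h2 hDC'
    -- circle-mean estimate
    have hgc : ContinuousOn g (Metric.ball (0:ℂ) 1) := hgd.continuousOn
    have hcm : ∀ r ∈ Set.Ioo (0:ℝ) 1, circleMean 1 G r ≤ M := by
      intro r hr
      set ζ : ℝ → ℂ := fun θ => (r : ℂ) * Complex.exp ((θ : ℂ) * Complex.I) with hζ
      have hζcont : Continuous ζ := by
        rw [hζ]
        exact continuous_const.mul (Complex.continuous_exp.comp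
          (Complex.continuous_ofReal.mul continuous_const))
      have hζnorm : ∀ θ : ℝ, ‖ζ θ‖ = r := by
        intro θ
        rw [hζ]
        simp only [norm_mul, Complex.norm_real, Real.norm_eq_abs,
          Complex.norm_exp_ofReal_mul_I, abs_of_nonneg hr.1.le, mul_one]
      obtain ⟨Mg, hMg⟩ := (isCompact_closedBall (0:ℂ) r).exists_bound_of_continuousOn
        (hgc.mono (fun x hx => by
          simp only [Metric.mem_ball, Metric.mem_closedBall, dist_zero_right] at *
          linarith [hr.2]))
      set Hc : ℝ → ℝ → ℝ := fun (θ : ℝ) (t : ℝ) => ‖g (((t:ℝ):ℂ) * ζ θ) * ((w t : ℝ) : ℂ)‖ with hHc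
      set ν1 := volume.restrict (Set.Ioc (0:ℝ) (2 * Real.pi)) with hν1
      set ν2 := volume.restrict (Set.Ioo (0:ℝ) 1) with hν2
      have hν1fin : IsFiniteMeasure ν1 := by
        constructor
        rw [hν1, Measure.restrict_apply_univ]
        exact measure_Ioc_lt_top
      have hmapball : ∀ x : ℝ × ℝ, x ∈ Set.Ioc (0:ℝ) (2 * Real.pi) ×ˢ Set.Ioo (0:ℝ) 1 →
          (x.2 : ℂ) * ζ x.1 ∈ Metric.ball (0:ℂ) 1 := by
        intro x hx
        obtain ⟨_, hx2⟩ := hx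
        simp only [Metric.mem_ball, dist_zero_right]
        rw [norm_mul, hζnorm, Complex.norm_real, Real.norm_eq_abs, abs_of_nonneg hx2.1.le]
        nlinarith [hx2.1, hx2.2, hr.1, hr.2]
      have hHm : AEStronglyMeasurable (Function.uncurry fun (θ : ℝ) (t : ℝ) => g (((t:ℝ):ℂ) * ζ θ) * ((w t : ℝ) : ℂ))
          (ν1.prod ν2) := by
        rw [hν1, hν2, Measure.prod_restrict]
        apply ContinuousOn.aestronglyMeasurable ?_ (measurableSet_Ioc.prod measurableSet_Ioo)
        apply ContinuousOn.mul
        · apply hgc.comp ?_ hmapball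
          apply Continuous.continuousOn
          exact (Complex.continuous_ofReal.comp continuous_snd).mul
            (hζcont.comp continuous_fst)
        · apply Complex.continuous_ofReal.comp_continuousOn
          apply hwcont.comp continuous_snd.continuousOn
          intro x hx
          exact hx.2
      have hHi : Integrable (Function.uncurry fun (θ : ℝ) (t : ℝ) => g (((t:ℝ):ℂ) * ζ θ) * ((w t : ℝ) : ℂ))
          (ν1.prod ν2) := by
        have hdom : Integrable (fun x : ℝ × ℝ => Mg * w x.2) (ν1.prod ν2) := by
          have h1 : Integrable (fun _ : ℝ => (1:ℝ)) ν1 := integrable_const _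
          have h2 : Integrable (fun t : ℝ => Mg * w t) ν2 := hwint.const_mul _
          have h3 := h1.mul_prod h2
          simpa using h3
        refine hdom.mono' hHm ?_
        rw [hν1, hν2, Measure.prod_restrict, MeasureTheory.ae_restrict_iff'
          (measurableSet_Ioc.prod measurableSet_Ioo)]
        refine Filter.Eventually.of_forall (fun x hx => ?_)
        have hball := hmapball x hx
        have hw := hw0 x.2 hx.2
        simp only [Function.uncurry]
        rw [norm_mul, Complex.norm_real, Real.norm_eq_abs, abs_of_nonneg hw]
        refine mul_le_mul_of_nonneg_right ?_ hw
        apply hMg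
        simp only [Metric.mem_ball, dist_zero_right] at hball
        simp only [Metric.mem_closedBall, dist_zero_right]
        rw [norm_mul, hζnorm, Complex.norm_real, Real.norm_eq_abs, abs_of_nonneg hx.2.1.le]
        nlinarith [hx.2.1, hx.2.2, hr.1]
      have hHnorm : Integrable (Function.uncurry Hc) (ν1.prod ν2) := by
        have h4 := hHi.norm
        exact h4.congr (Filter.Eventually.of_forall fun x => rfl)
      have hBc : (B : ℂ) ≠ 0 := by exact_mod_cast hB.ne'
      have hptw : ∀ θ : ℝ, ‖G (ζ θ)‖ ≤ (1/B) * ∫ t in Set.Ioo (0:ℝ) 1, Hc θ t := by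
        intro θ
        have hz : ‖ζ θ‖ < 1 := by rw [hζnorm]; exact hr.2
        have hk := key (ζ θ) hz
        have hGval : G (ζ θ) =
            (∫ t in Set.Ioo (0:ℝ) 1, g ((t:ℂ) * ζ θ) * (w t : ℂ)) / (B:ℂ) := by
          rw [eq_div_iff hBc]
          exact hk
        rw [hGval, norm_div, Complex.norm_real, Real.norm_eq_abs, abs_of_pos hB,
          div_eq_inv_mul, ← one_div]
        refine mul_le_mul_of_nonneg_left ?_ (by positivity)
        exact norm_integral_le_integral_norm _
      have hG'cont : Continuous (fun θ : ℝ => ‖G (ζ θ)‖) := by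
        apply Continuous.norm
        apply (hdiff.continuousOn).comp_continuous hζcont
        intro θ
        simp only [Metric.mem_ball, dist_zero_right]
        rw [hζnorm]; exact hr.2
      have hInt1 : IntervalIntegrable (fun θ => ‖G (ζ θ)‖) volume 0 (2 * Real.pi) :=
        hG'cont.intervalIntegrable _ _
      have hIθ : Integrable (fun θ => ∫ t in Set.Ioo (0:ℝ) 1, Hc θ t) ν1 := by
        have h5 := hHnorm.integral_prod_left
        exact h5
      have hInt2 : IntervalIntegrable (fun θ => (1/B) * ∫ t in Set.Ioo (0:ℝ) 1, Hc θ t)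
          volume 0 (2 * Real.pi) := by
        rw [intervalIntegrable_iff_integrableOn_Ioc_of_le (by positivity)]
        exact hIθ.const_mul _
      have step1 : (∫ θ in (0:ℝ)..(2 * Real.pi), ‖G (ζ θ)‖) ≤
          ∫ θ in (0:ℝ)..(2 * Real.pi), (1/B) * ∫ t in Set.Ioo (0:ℝ) 1, Hc θ t :=
        intervalIntegral.integral_mono_on (by positivity) hInt1 hInt2 (fun θ _ => hptw θ)
      have step2 : (∫ θ in (0:ℝ)..(2 * Real.pi), (1/B) * ∫ t in Set.Ioo (0:ℝ) 1, Hc θ t)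
          = (1/B) * ∫ θ, (∫ t, Hc θ t ∂ν2) ∂ν1 := by
        rw [intervalIntegral.integral_const_mul,
          intervalIntegral.integral_of_le (by positivity : (0:ℝ) ≤ 2 * Real.pi)]
      have hswap : (∫ θ, (∫ t, Hc θ t ∂ν2) ∂ν1) = ∫ t, (∫ θ, Hc θ t ∂ν1) ∂ν2 :=
        MeasureTheory.integral_integral_swap hHnorm
      have hwM : Integrable (fun t => (2 * Real.pi * M) * w t) ν2 := hwint.const_mul _
      have hIt : Integrable (fun t => ∫ θ, Hc θ t ∂ν1) ν2 := hHnorm.integral_prod_right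
      have step4 : (∫ t, (∫ θ, Hc θ t ∂ν1) ∂ν2) ≤
          ∫ t in Set.Ioo (0:ℝ) 1, (2 * Real.pi * M) * w t := by
        refine setIntegral_mono_on hIt hwM measurableSet_Ioo ?_
        intro t ht
        have hwt := hw0 t ht
        have hHval : (fun θ => Hc θ t) = fun θ => ‖g ((t:ℂ) * ζ θ)‖ * w t := by
          funext θ
          rw [hHc]
          simp only []
          rw [norm_mul, Complex.norm_real, Real.norm_eq_abs, abs_of_nonneg hwt]
        rw [hHval, MeasureTheory.integral_mul_const]
        have harg : ∀ θ : ℝ, (t:ℂ) * ζ θ =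
            ((t * r : ℝ) : ℂ) * Complex.exp ((θ:ℂ) * Complex.I) := by
          intro θ
          rw [hζ]
          push_cast
          ring
        have hcirc : (∫ θ, ‖g ((t:ℂ) * ζ θ)‖ ∂ν1) = (2 * Real.pi) * circleMean 1 g (t * r) := by
          rw [circleMean_one_eq, hν1,
            ← intervalIntegral.integral_of_le (by positivity : (0:ℝ) ≤ 2 * Real.pi)]
          rw [show (fun θ : ℝ => ‖g ((t:ℂ) * ζ θ)‖) =
              fun θ : ℝ => ‖g (((t*r:ℝ):ℂ) * Complex.exp ((θ:ℂ) * Complex.I))‖ from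
            funext fun θ => by rw [harg θ]]
          rw [← mul_assoc, mul_one_div, div_self (by positivity : (2*Real.pi) ≠ 0), one_mul]
        rw [hcirc]
        have htr : t * r ∈ Set.Ioo (0:ℝ) 1 :=
          ⟨mul_pos ht.1 hr.1, by nlinarith [ht.1, ht.2, hr.1, hr.2]⟩
        have hcmle := circleMean_le_toReal hgfin.ne htr
        refine mul_le_mul_of_nonneg_right ?_ hwt
        have h2pi : (0:ℝ) ≤ 2 * Real.pi := by positivity
        exact mul_le_mul_of_nonneg_left hcmle h2pi
      have hweq : (∫ t in Set.Ioo (0:ℝ) 1, w t) = ∫ t in Set.Ioo (0:ℝ) 1, t ^ 0 * w t := by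
        simp
      have step5 : (∫ t in Set.Ioo (0:ℝ) 1, (2 * Real.pi * M) * w t)
          = 2 * Real.pi * M * (c 0 * B) := by
        rw [MeasureTheory.integral_const_mul, hweq, ← hmom 0]
      have hc0B : c 0 * B ≤ B := by nlinarith [hc0 0, hc1 0, hB]
      rw [circleMean_one_eq]
      have e1 : (∫ θ in (0:ℝ)..(2 * Real.pi), ‖G ((r:ℂ) * Complex.exp ((θ:ℂ)*Complex.I))‖)
          = ∫ θ in (0:ℝ)..(2 * Real.pi), ‖G (ζ θ)‖ := rfl
      rw [e1]
      have h2 := step1.trans_eq step2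
      have h3 : (∫ θ, (∫ t, Hc θ t ∂ν2) ∂ν1) ≤ 2 * Real.pi * M * B := by
        rw [hswap]
        refine step4.trans ?_
        rw [step5]
        have h2πM : (0:ℝ) ≤ 2 * Real.pi * M := mul_nonneg (by positivity) hM0
        have := mul_le_mul_of_nonneg_left hc0B h2πM
        linarith
      have h4 : (∫ θ in (0:ℝ)..(2 * Real.pi), ‖G (ζ θ)‖) ≤ (1/B) * (2 * Real.pi * M * B) :=
        h2.trans (mul_le_mul_of_nonneg_left h3 (by positivity))
      have h5 : (1/(2*Real.pi)) * ((1/B) * (2 * Real.pi * M * B)) = M := by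
        field_simp
      calc (1/(2*Real.pi)) * (∫ θ in (0:ℝ)..(2 * Real.pi), ‖G (ζ θ)‖)
          ≤ (1/(2*Real.pi)) * ((1/B) * (2 * Real.pi * M * B)) :=
            mul_le_mul_of_nonneg_left h4 (by positivity)
        _ = M := h5
    have hHle : hardyNorm 1 G ≤ hardyNorm 1 g := by
      refine (hardyNorm_one_le hcm).trans ?_
      rw [hMdef, ENNReal.ofReal_toReal hgfin.ne]
    exact ⟨⟨hdiff, lt_of_le_of_lt hHle hgfin⟩, hHle⟩
  · -- Case B : radius < 1
    have hg0 : ∀ z : ℂ, p.radius < (‖z‖₊ : ℝ≥0∞) → g z = 0 := by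
      intro z hz
      apply tsum_eq_zero_of_not_summable
      intro hsm
      obtain ⟨C, hC⟩ := (hsm.tendsto_atTop_zero.norm).bddAbove_range
      have hle : (‖z‖₊ : ℝ≥0∞) ≤ p.radius := by
        apply p.le_radius_of_bound C
        intro n
        have h1 := hC (Set.mem_range_self n)
        rw [hpnorm]
        calc ‖b n‖ * ((‖z‖₊ : ℝ)) ^ n = ‖b n * z ^ n‖ := by
              rw [coe_nnnorm, norm_mul, norm_pow]
          _ ≤ C := h1
      exact absurd hle (not_le.2 hz)
    rcases eq_zero_or_pos p.radius with hrad0 | hradpos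
    · -- radius zero : both functions vanish identically
      have hgz : ∀ z : ℂ, z ≠ 0 → g z = 0 := by
        intro z hz
        apply hg0
        rw [hrad0]
        simpa using hz
      have hb0 : b 0 = 0 := by
        have hcont : ContinuousAt g 0 :=
          hgd.continuousOn.continuousAt (Metric.ball_mem_nhds _ one_pos)
        have hg00 : g 0 = b 0 := by
          rw [hgdef]
          simp only []
          rw [tsum_eq_single 0 (fun n hn => by rw [zero_pow hn, mul_zero])]
          simp
        have htend : Filter.Tendsto g (nhdsWithin 0 {(0:ℂ)}ᶜ) (nhds (g 0)) :=
          hcont.tendsto.mono_left nhdsWithin_le_nhds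
        have htend0 : Filter.Tendsto g (nhdsWithin 0 {(0:ℂ)}ᶜ) (nhds 0) := by
          apply Filter.Tendsto.congr' ?_ tendsto_const_nhds
          filter_upwards [self_mem_nhdsWithin] with x hx
          exact (hgz x hx).symm
        have huniq := tendsto_nhds_unique htend htend0
        rwa [hg00] at huniq
      have hGz : ∀ z : ℂ, G z = 0 := by
        intro z
        by_cases hz : z = 0
        · rw [hGdef]
          simp only []
          rw [hz, tsum_eq_single 0 (fun n hn => by rw [zero_pow hn, mul_zero]), hb0]
          simp
        · apply tsum_eq_zero_of_not_summable
          intro hsm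
          obtain ⟨δ, hδ, hδle⟩ := hlow (1/2) (by norm_num)
          obtain ⟨C, hC⟩ := (hsm.tendsto_atTop_zero.norm).bddAbove_range
          have hle : ((‖z‖₊ / 2 : ℝ≥0) : ℝ≥0∞) ≤ p.radius := by
            apply p.le_radius_of_bound (C / δ)
            intro n
            have h1 := hC (Set.mem_range_self n)
            have h2 : c n * (‖b n‖ * ‖z‖ ^ n) ≤ C := by
              calc c n * (‖b n‖ * ‖z‖ ^ n) = ‖(c n : ℂ) * b n * z ^ n‖ := by
                    rw [norm_mul, norm_mul, norm_pow, Complex.norm_real, Real.norm_eq_abs,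
                      abs_of_pos (hc0 n), mul_assoc]
                _ ≤ C := h1
            have h3 : δ * (1/2) ^ n ≤ c n := hδle n
            have hco : (((‖z‖₊ / 2 : ℝ≥0)) : ℝ) = ‖z‖ / 2 := by
              push_cast
              ring
            rw [hpnorm, hco, le_div_iff₀ hδ]
            calc ‖b n‖ * (‖z‖ / 2) ^ n * δ = (‖b n‖ * ‖z‖ ^ n) * (δ * (1/2) ^ n) := by
                  rw [div_pow, one_div_pow]
                  ring
              _ ≤ (‖b n‖ * ‖z‖ ^ n) * c n := by
                  refine mul_le_mul_of_nonneg_left h3 (by positivity)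
              _ = c n * (‖b n‖ * ‖z‖ ^ n) := by ring
              _ ≤ C := h2
          rw [hrad0, nonpos_iff_eq_zero, ENNReal.coe_eq_zero, div_eq_zero_iff] at hle
          rcases hle with h | h
          · exact hz (by simpa using h)
          · norm_num at h
      have hfun : G = fun _ : ℂ => (0:ℂ) := funext hGz
      have hHN : hardyNorm 1 G = 0 := by
        have hcm0 : ∀ r ∈ Set.Ioo (0:ℝ) 1, circleMean 1 G r ≤ 0 := by
          intro r hr
          rw [circleMean_one_eq]
          have hz0 : ∀ θ : ℝ, ‖G ((r:ℂ) * Complex.exp ((θ:ℂ)*Complex.I))‖ = 0 := fun θ => by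
            rw [hGz]
            simp
          rw [intervalIntegral.integral_congr (g := fun _ => (0:ℝ)) (fun θ _ => hz0 θ)]
          simp
        refine le_antisymm ?_ zero_le
        have h6 := hardyNorm_one_le hcm0
        simpa using h6
      refine ⟨⟨?_, ?_⟩, ?_⟩
      · rw [hfun]
        exact differentiableOn_const 0
      · rw [hHN]
        simp
      · rw [hHN]
        exact zero_le
    · -- 0 < radius < 1 : impossible
      exfalso
      obtain ⟨r0, hr0a, hr0b⟩ := ENNReal.lt_iff_exists_nnreal_btwn.1 hlt
      have h01 : (r0 : ℝ) < 1 := by exact_mod_cast hr0b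
      have h00 : (0:ℝ) ≤ (r0:ℝ) := r0.2
      set z₀ : ℂ := ((((r0:ℝ) + 1) / 2 : ℝ) : ℂ) with hz₀
      have hz₀norm : ‖z₀‖ = ((r0:ℝ) + 1) / 2 := by
        rw [hz₀, Complex.norm_real, Real.norm_eq_abs, abs_of_nonneg (by linarith)]
      set U : Set ℂ := {z | (r0:ℝ) < ‖z‖} ∩ Metric.ball (0:ℂ) 1 with hU
      have hUopen : IsOpen U :=
        (isOpen_lt continuous_const continuous_norm).inter Metric.isOpen_ball
      have hzU : z₀ ∈ U := by
        constructor
        · rw [Set.mem_setOf_eq, hz₀norm]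
          linarith
        · rw [Metric.mem_ball, dist_zero_right, hz₀norm]
          linarith
      have hUzero : Set.EqOn g 0 U := by
        intro z hz
        apply hg0
        refine lt_trans hr0a ?_
        rw [ENNReal.coe_lt_coe, ← NNReal.coe_lt_coe, coe_nnnorm]
        exact hz.1
      have hganalytic := hgd.analyticOnNhd Metric.isOpen_ball
      have heq : Set.EqOn g 0 (Metric.ball (0:ℂ) 1) := by
        refine hganalytic.eqOn_zero_of_preconnected_of_eventuallyEq_zero
          ((convex_ball (0:ℂ) 1).isPreconnected) hzU.2 ?_
        exact Filter.eventuallyEq_of_mem (hUopen.mem_nhds hzU) hUzero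
      have hps : HasFPowerSeriesOnBall g p 0 p.radius := by
        have h7 := p.hasFPowerSeriesOnBall hradpos
        rwa [hpsum] at h7
      have hgev : g =ᶠ[nhds (0:ℂ)] 0 :=
        Filter.eventuallyEq_of_mem (Metric.ball_mem_nhds (0:ℂ) one_pos) heq
      have hp0 : p = 0 := (hps.hasFPowerSeriesAt.congr hgev).eq_zero
      have htop : p.radius = ⊤ := by
        apply ENNReal.eq_top_of_forall_nnreal_le
        intro s
        apply p.le_radius_of_bound 0
        intro n
        rw [hp0]
        simp
      rw [htop] at hlt
      exact absurd hlt (by simp)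

end HardyMult

end
/-- For `0 < p ≤ 1` and `μ` a finite positive Borel measure on
`[0,1)` which is a `1/p`-Carleson measure, if `H_{μ,α} : H^p → H^1` is bounded
for some `α > 0`, then `H_{μ,α'} : H^p → H^1` is bounded for every `0 < α' < α`. -/
theorem genHilbert_bounded_of_lt (p α : ℝ) (hp0 : 0 < p) (hp1 : p ≤ 1)
    (hα : 0 < α) (μ : Measure ℝ) [IsFiniteMeasure μ]
    (hsupp : μ (Set.Ico (0:ℝ) 1)ᶜ = 0) (hcar : IsCarleson μ (1 / p))
    (hbd : BoundedOp μ α p 1) :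
    ∀ α' : ℝ, 0 < α' → α' < α → BoundedOp μ α' p 1 := by
  intro α' hα'0 hα'lt
  obtain ⟨C, hC, hmap⟩ := hbd
  refine ⟨C, hC, fun f hf => ?_⟩
  classical
  set b : ℕ → ℂ := fun n => ∑' k : ℕ, (hilbCoef μ α n k : ℂ) * taylorCoeff f k with hbdef
  set cf : ℕ → ℝ := fun n =>
    Real.Gamma ((n:ℝ) + α') * Real.Gamma α / (Real.Gamma ((n:ℝ) + α) * Real.Gamma α') with hcf
  have hΓ : ∀ x : ℝ, 0 < x → 0 < Real.Gamma x := fun x hx => Real.Gamma_pos_of_pos hx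
  have hnα' : ∀ n : ℕ, (0:ℝ) < (n:ℝ) + α' := fun n =>
    add_pos_of_nonneg_of_pos (Nat.cast_nonneg n) hα'0
  have hnα : ∀ n : ℕ, (0:ℝ) < (n:ℝ) + α := fun n =>
    add_pos_of_nonneg_of_pos (Nat.cast_nonneg n) hα
  have hn1 : ∀ n : ℕ, (0:ℝ) < (n:ℝ) + 1 := fun n =>
    add_pos_of_nonneg_of_pos (Nat.cast_nonneg n) one_pos
  have hcpos : ∀ n : ℕ, 0 < cf n := fun n =>
    div_pos (mul_pos (hΓ _ (hnα' n)) (hΓ _ hα)) (mul_pos (hΓ _ (hnα n)) (hΓ _ hα'0))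
  set β : ℝ := α - α' with hβ
  have hβ0 : 0 < β := by rw [hβ]; linarith
  set w : ℝ → ℝ := fun t => t ^ (α' - 1) * (1 - t) ^ (β - 1) with hw
  set B : ℝ := Real.Gamma α' * Real.Gamma β / Real.Gamma α with hB
  have hBpos : 0 < B := div_pos (mul_pos (hΓ _ hα'0) (hΓ _ hβ0)) (hΓ _ hα)
  have hw0 : ∀ t ∈ Set.Ioo (0:ℝ) 1, 0 ≤ w t := fun t ht =>
    mul_nonneg (Real.rpow_nonneg ht.1.le _) (Real.rpow_nonneg (by linarith [ht.2]) _)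
  have hwpos : ∀ t ∈ Set.Ioo (0:ℝ) 1, 0 < w t := fun t ht =>
    mul_pos (Real.rpow_pos_of_pos ht.1 _) (Real.rpow_pos_of_pos (by linarith [ht.2]) _)
  have hwcont : ContinuousOn w (Set.Ioo (0:ℝ) 1) := by
    intro t ht
    have c1 : ContinuousAt (fun s : ℝ => s ^ (α' - 1)) t :=
      Real.continuousAt_rpow_const t _ (Or.inl ht.1.ne')
    have c2 : ContinuousAt (fun s : ℝ => (1 - s) ^ (β - 1)) t := by
      have h1t : (1:ℝ) - t ≠ 0 := by
        have := ht.2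
        intro hcon
        nlinarith
      exact (Real.continuousAt_rpow_const (1 - t) _ (Or.inl h1t)).comp
        ((continuous_const.sub continuous_id).continuousAt)
    exact (c1.mul c2).continuousWithinAt
  -- moment identities
  have hEq : ∀ n : ℕ, Set.EqOn (fun t : ℝ => t ^ n * w t)
      (fun t : ℝ => t ^ (((n:ℝ) + α') - 1) * (1 - t) ^ (β - 1)) (Set.Ioo 0 1) := by
    intro n t ht
    simp only [hw]
    rw [← mul_assoc]
    congr 1
    rw [← Real.rpow_natCast t n, ← Real.rpow_add ht.1]
    congr 1
    ring
  have hmom_int : ∀ n : ℕ, IntegrableOn (fun t => (t:ℝ) ^ n * w t) (Set.Ioo (0:ℝ) 1) := by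
    intro n
    have h := beta_integrableOn (a := (n:ℝ) + α') (b := β) (hnα' n) hβ0
    exact h.congr_fun (fun t ht => (hEq n ht).symm) measurableSet_Ioo
  have hwint : IntegrableOn w (Set.Ioo (0:ℝ) 1) := by
    have h := hmom_int 0
    simpa using h
  have hΓne : ∀ x : ℝ, 0 < x → Real.Gamma x ≠ 0 := fun x hx => (hΓ x hx).ne'
  have hmom : ∀ n : ℕ, cf n * B = ∫ t in Set.Ioo (0:ℝ) 1, (t:ℝ) ^ n * w t := by
    intro n
    have heq2 : (∫ t in Set.Ioo (0:ℝ) 1, (t:ℝ) ^ n * w t)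
        = ∫ t in Set.Ioo (0:ℝ) 1, t ^ (((n:ℝ) + α') - 1) * (1 - t) ^ (β - 1) :=
      setIntegral_congr_fun measurableSet_Ioo (hEq n)
    rw [heq2, beta_value (hnα' n) hβ0]
    rw [show (n:ℝ) + α' + β = (n:ℝ) + α by rw [hβ]; ring]
    rw [hcf, hB]
    have h1 := hΓne _ (hnα n)
    have h2 := hΓne _ hα
    have h3 := hΓne _ hα'0
    field_simp
  have hc1 : ∀ n : ℕ, cf n ≤ 1 := by
    intro n
    have hc0eq : cf 0 = 1 := by
      rw [hcf]
      simp only [Nat.cast_zero, zero_add]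
      field_simp
    have h1 : cf n * B ≤ cf 0 * B := by
      rw [hmom n, hmom 0]
      refine setIntegral_mono_on (hmom_int n) ?_ measurableSet_Ioo ?_
      · simpa using hmom_int 0
      · intro t ht
        have h2 : t ^ n ≤ 1 := pow_le_one₀ ht.1.le ht.2.le
        have h3 := hw0 t ht
        simpa using mul_le_mul_of_nonneg_right h2 h3
    rw [hc0eq, one_mul] at h1
    have h4 : cf n * B ≤ 1 * B := by rwa [one_mul]
    exact le_of_mul_le_mul_right h4 hBpos
  have hlow : ∀ ρ : ℝ, ρ ∈ Set.Ioo (0:ℝ) 1 → ∃ δ : ℝ, 0 < δ ∧ ∀ n : ℕ, δ * ρ ^ n ≤ cf n := by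
    intro ρ hρ
    have hsub : Set.Ioo ρ 1 ⊆ Set.Ioo (0:ℝ) 1 := fun x hx => ⟨hρ.1.trans hx.1, hx.2⟩
    have hwIρ : IntegrableOn w (Set.Ioo ρ 1) := hwint.mono_set hsub
    have hpos : 0 < ∫ t in Set.Ioo ρ 1, w t := by
      have hae : (0:ℝ → ℝ) ≤ᵐ[volume.restrict (Set.Ioo ρ 1)] w := by
        have h6 : ∀ᵐ t ∂volume.restrict (Set.Ioo ρ 1), 0 ≤ w t :=
          (ae_restrict_iff' measurableSet_Ioo).2
            (Filter.Eventually.of_forall fun t ht => hw0 t (hsub ht))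
        exact h6
      rw [setIntegral_pos_iff_support_of_nonneg_ae hae hwIρ]
      refine lt_of_lt_of_le ?_
        (measure_mono (fun x hx => ⟨(hwpos x (hsub hx)).ne', hx⟩))
      show (0:ℝ≥0∞) < volume (Set.Ioo ρ 1)
      rw [Real.volume_Ioo]
      exact ENNReal.ofReal_pos.2 (by linarith [hρ.2])
    refine ⟨(∫ t in Set.Ioo ρ 1, w t) / B, div_pos hpos hBpos, fun n => ?_⟩
    rw [div_mul_eq_mul_div, div_le_iff₀ hBpos]
    rw [hmom n]
    calc (∫ t in Set.Ioo ρ 1, w t) * ρ ^ n = ∫ t in Set.Ioo ρ 1, ρ ^ n * w t := by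
          rw [MeasureTheory.integral_const_mul]
          ring
      _ ≤ ∫ t in Set.Ioo ρ 1, t ^ n * w t := by
          refine setIntegral_mono_on (hwIρ.const_mul _) ((hmom_int n).mono_set hsub)
            measurableSet_Ioo ?_
          intro t ht
          exact mul_le_mul_of_nonneg_right (pow_le_pow_left₀ hρ.1.le ht.1.le n)
            (hw0 t (hsub ht))
      _ ≤ ∫ t in Set.Ioo (0:ℝ) 1, t ^ n * w t := by
          refine setIntegral_mono_set (hmom_int n) ?_ hsub.eventuallyLE
          have hae : ∀ᵐ t ∂volume.restrict (Set.Ioo (0:ℝ) 1), 0 ≤ t ^ n * w t :=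
            (ae_restrict_iff' measurableSet_Ioo).2
              (Filter.Eventually.of_forall fun t ht =>
                mul_nonneg (pow_nonneg ht.1.le n) (hw0 t ht))
          exact hae
  -- relation between the two Hilbert coefficient matrices
  have hilb_rel : ∀ n k : ℕ, hilbCoef μ α' n k = cf n * hilbCoef μ α n k := by
    intro n k
    unfold hilbCoef
    have h1 : ∀ γ : ℝ, (∫ t in Set.Ico (0:ℝ) 1,
        (Real.Gamma ((n:ℝ) + γ) / (Real.Gamma ((n:ℝ) + 1) * Real.Gamma γ)) * t ^ (n + k) ∂μ)
        = (Real.Gamma ((n:ℝ) + γ) / (Real.Gamma ((n:ℝ) + 1) * Real.Gamma γ)) *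
          ∫ t in Set.Ico (0:ℝ) 1, t ^ (n + k) ∂μ := fun γ =>
      MeasureTheory.integral_const_mul _ _
    rw [h1, h1, ← mul_assoc]
    congr 1
    have h2 := hΓne _ (hnα n)
    have h3 := hΓne _ hα
    have h4 := hΓne _ hα'0
    have h5 := hΓne _ (hn1 n)
    rw [hcf]
    field_simp
  have hgenα : genHilbert μ α f = fun z => ∑' n : ℕ, b n * z ^ n := rfl
  have hgenα' : genHilbert μ α' f = fun z => ∑' n : ℕ, (cf n : ℂ) * b n * z ^ n := by
    funext z
    unfold genHilbert
    refine tsum_congr fun n => ?_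
    congr 1
    rw [show (∑' k : ℕ, (hilbCoef μ α' n k : ℂ) * taylorCoeff f k)
        = ∑' k : ℕ, (cf n : ℂ) * ((hilbCoef μ α n k : ℂ) * taylorCoeff f k) from
      tsum_congr fun k => by rw [hilb_rel n k]; push_cast; ring]
    rw [tsum_mul_left]
  obtain ⟨hmem, hle⟩ := hmap f hf
  rw [hgenα] at hmem hle
  obtain ⟨hmem', hle'⟩ := hardy_mult b cf w B hBpos hw0 hwcont hwint hmom_int hmom
    hcpos hc1 hlow hmem
  rw [hgenα']
  exact ⟨hmem', hle'.trans hle⟩
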